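/- Assume 0 ≤ λ < 1, that there exists T ∈ ℕ with c_τ = 0 for all τ > T and u_τ = 0 for all τ ≥ T. Then for every t ≤ T−1, the infinite-series and the finite-horizon forms of the λ-weighted synthetic gradient coincide: (1−λ) Σ_{n=1}^{∞} λ^{n−1} G_t^{(n)} = (1−λ) Σ_{n=1}^{T−t−1} λ^{n−1} G_t^{(n)} + λ^{T−t−1} G_t, where G_t := Σ_{k=1}^{T−t} γ^{k−1} c_{t+k} P(t+k,t) is the true backpropagated gradient. -/

import Mathlib

open Finset Matrix

noncomputable section

/-- Propagator `Pfrom J a n = P(a+n, a) = J_{a+n-1} ⋯ J_a`. -/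
def Pfrom {d : ℕ} (J : ℕ → Matrix (Fin d) (Fin d) ℝ) (a : ℕ) : ℕ → Matrix (Fin d) (Fin d) ℝ
  | 0 => 1
  | n + 1 => J (a + n) * Pfrom J a n

/-- Propagator `P J b a = P(b, a) = J_{b-1} ⋯ J_a` (for `b ≥ a`). -/
def P {d : ℕ} (J : ℕ → Matrix (Fin d) (Fin d) ℝ) (b a : ℕ) : Matrix (Fin d) (Fin d) ℝ :=
  Pfrom J a (b - a)

/-- The n-step synthetic gradient `G_a^{(n)}`. -/
def Gn {d : ℕ} (γ : ℝ) (J : ℕ → Matrix (Fin d) (Fin d) ℝ) (c u : ℕ → Fin d → ℝ)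
    (a n : ℕ) : Fin d → ℝ :=
  (∑ k ∈ Finset.range n, γ ^ k • Matrix.vecMul (c (a + k + 1)) (P J (a + k + 1) a))
    + γ ^ n • Matrix.vecMul (u (a + n)) (P J (a + n) a)

/-- The interim λ-weighted synthetic gradient `G_a^{λ|H}`. -/
def GLam {d : ℕ} (γ lam : ℝ) (J : ℕ → Matrix (Fin d) (Fin d) ℝ) (c u : ℕ → Fin d → ℝ)
    (a H : ℕ) : Fin d → ℝ :=
  (1 - lam) • (∑ n ∈ Finset.range (H - a - 1), lam ^ n • Gn γ J c u a (n + 1))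
    + lam ^ (H - a - 1) • Gn γ J c u a (H - a)

/-- The modified temporal-difference error `δ'_{a,t}`. -/
def δ' {d : ℕ} (γ : ℝ) (J : ℕ → Matrix (Fin d) (Fin d) ℝ) (c u : ℕ → Fin d → ℝ)
    (a t : ℕ) : Fin d → ℝ :=
  Matrix.vecMul (c (t + 1) + γ • u (t + 1)) (P J (t + 1) a) - Matrix.vecMul (u t) (P J t a)

/-- The temporal-difference error `δ_t`. -/
def δtd {d : ℕ} (γ : ℝ) (J : ℕ → Matrix (Fin d) (Fin d) ℝ) (c u w : ℕ → Fin d → ℝ)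
    (t : ℕ) : Fin d → ℝ :=
  Matrix.vecMul (c (t + 1) + γ • u (t + 1)) (P J (t + 1) t) - w t

/-- `δ_{a,t} = δ_t P(t,a)`. -/
def δab {d : ℕ} (γ : ℝ) (J : ℕ → Matrix (Fin d) (Fin d) ℝ) (c u w : ℕ → Fin d → ℝ)
    (a t : ℕ) : Fin d → ℝ :=
  Matrix.vecMul (δtd γ J c u w t) (P J t a)

/-- assuming `0 ≤ λ < 1`, `c_τ = 0` for all `τ > T` and `u_τ = 0`
for all `τ ≥ T`, for every `t ≤ T−1` the infinite-series and finite-horizon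
forms of the λ-weighted synthetic gradient coincide:
`(1−λ) Σ_{n=1}^∞ λ^{n−1} G_t^{(n)} = (1−λ) Σ_{n=1}^{T−t−1} λ^{n−1} G_t^{(n)} + λ^{T−t−1} G_t`,
where `G_t = Σ_{k=1}^{T−t} γ^{k−1} c_{t+k} P(t+k,t)` is the true backpropagated gradient. -/
theorem lambda_SG_infinite_eq_finite_horizon {d : ℕ} (γ lam : ℝ)
    (hlam0 : 0 ≤ lam) (hlam1 : lam < 1)
    (J : ℕ → Matrix (Fin d) (Fin d) ℝ) (c u : ℕ → Fin d → ℝ)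
    (T : ℕ) (hc : ∀ τ, T < τ → c τ = 0) (hu : ∀ τ, T ≤ τ → u τ = 0)
    (t : ℕ) (ht : t + 1 ≤ T) :
    (1 - lam) • ∑' n : ℕ, lam ^ n • Gn γ J c u t (n + 1)
      = (1 - lam) • (∑ n ∈ Finset.range (T - t - 1), lam ^ n • Gn γ J c u t (n + 1))
        + lam ^ (T - t - 1) •
            ∑ k ∈ Finset.range (T - t), γ ^ k • Matrix.vecMul (c (t + k + 1)) (P J (t + k + 1) t) := by
  set N := T - t - 1 with hN
  set G : Fin d → ℝ :=
      ∑ k ∈ Finset.range (T - t), γ ^ k • Matrix.vecMul (c (t + k + 1)) (P J (t + k + 1) t)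
    with hGdef
  have hG : ∀ n, N ≤ n → Gn γ J c u t (n + 1) = G := by
    intro n hn
    have h1 : T - t ≤ n + 1 := by omega
    unfold Gn
    have hu0 : u (t + (n + 1)) = 0 := hu _ (by omega)
    rw [hu0]
    simp only [Matrix.zero_vecMul, smul_zero, add_zero]
    rw [hGdef]
    refine (Finset.sum_subset (Finset.range_subset_range.2 h1) ?_).symm
    intro k hk hk'
    have hck : T < t + k + 1 := by
      simp only [Finset.mem_range] at hk hk'; omega
    rw [hc _ hck]
    simp
  have hgeo : Summable (fun n : ℕ => lam ^ n) :=
    summable_geometric_of_lt_one hlam0 hlam1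
  have htail : (fun n : ℕ => lam ^ (n + N) • Gn γ J c u t (n + N + 1))
      = fun n : ℕ => (lam ^ n * lam ^ N) • G := by
    funext n
    rw [hG _ (by omega), pow_add]
  have hsumtail : Summable (fun n : ℕ => lam ^ (n + N) • Gn γ J c u t (n + N + 1)) := by
    rw [htail]
    exact (hgeo.mul_right (lam ^ N)).smul_const G
  have hsum : Summable (fun n : ℕ => lam ^ n • Gn γ J c u t (n + 1)) :=
    (summable_nat_add_iff N).1 hsumtail
  rw [← Summable.sum_add_tsum_nat_add N hsum]
  have hts : ∑' n : ℕ, lam ^ (n + N) • Gn γ J c u t (n + N + 1)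
      = (1 - lam)⁻¹ • lam ^ N • G := by
    rw [htail]
    simp_rw [mul_smul]
    rw [Summable.tsum_smul_const hgeo, tsum_geometric_of_lt_one hlam0 hlam1]
  rw [hts, smul_add, smul_smul, mul_inv_cancel₀ (by linarith), one_smul]

end
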